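/- For natural numbers i ≥ j ≥ m ≥ 1, we have 2^i ≡ 2^j (mod 10^m) if and only if i ≡ j (mod 4·5^(m-1)). -/

import Mathlib

lemma order2mod5 : orderOf (2 : ZMod 5) = 4 := by
  have := orderOf_eq_prime_pow (x := (2 : ZMod 5)) (p := 2) (n := 1)
    (by decide) (by decide)
  simpa using this

lemma four_dvd_of (n : ℕ) (h : (5:ℤ) ∣ 2 ^ n - 1) : 4 ∣ n := by
  have h1 : (2 : ZMod 5) ^ n = 1 := by
    rw [show (5:ℤ) = ((5:ℕ):ℤ) by norm_num, ← ZMod.intCast_zmod_eq_zero_iff_dvd] at h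
    push_cast at h
    exact sub_eq_zero.mp h
  have := orderOf_dvd_of_pow_eq_one h1
  rwa [order2mod5] at this

lemma key (m n : ℕ) (hm : 1 ≤ m) :
    (5:ℤ) ^ m ∣ 2 ^ n - 1 ↔ 4 * 5 ^ (m - 1) ∣ n := by
  rcases Nat.eq_zero_or_pos n with rfl | hn
  · simp
  by_cases h4 : 4 ∣ n
  · obtain ⟨k, rfl⟩ := h4
    have hk : k ≠ 0 := by omega
    have hfin : FiniteMultiplicity 5 k := Nat.finiteMultiplicity_iff.2 ⟨by norm_num, Nat.pos_of_ne_zero hk⟩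
    set v := multiplicity 5 k with hv
    have hev : emultiplicity 5 k = (v : ℕ∞) := hfin.emultiplicity_eq_multiplicity
    have lte := Int.emultiplicity_pow_sub_pow (p := 5) (by norm_num) (by decide)
      (x := 16) (y := 1) (by norm_num) (by norm_num) k
    norm_num at lte
    have h15 : emultiplicity (5:ℤ) 15 = (1 : ℕ) :=
      emultiplicity_eq_of_dvd_of_not_dvd (by norm_num) (by norm_num)
    rw [h15, hev] at lte
    have heq : (2:ℤ) ^ (4 * k) - 1 = 16 ^ k - 1 := by
      rw [pow_mul]; norm_num
    rw [heq, pow_dvd_iff_le_emultiplicity, lte]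
    have hRHS : 4 * 5 ^ (m - 1) ∣ 4 * k ↔ 5 ^ (m - 1) ∣ k := by
      rw [mul_dvd_mul_iff_left (by norm_num : (4:ℕ) ≠ 0)]
    rw [hRHS, hfin.pow_dvd_iff_le_multiplicity]
    rw [show ((1:ℕ) : ℕ∞) + (v : ℕ∞) = ((1 + v : ℕ) : ℕ∞) by push_cast; ring]
    rw [Nat.cast_le]
    omega
  · constructor
    · intro h
      exact absurd (four_dvd_of n ((dvd_pow_self (5:ℤ) (by omega : m ≠ 0)).trans h)) h4
    · intro h
      exact absurd (dvd_trans ⟨5 ^ (m-1), rfl⟩ h) h4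

theorem stmt_0 (i j m : ℕ) (hm : 1 ≤ m) (hmj : m ≤ j) (hji : j ≤ i) :
    2 ^ i ≡ 2 ^ j [MOD 10 ^ m] ↔ i ≡ j [MOD 4 * 5 ^ (m - 1)] := by
  set n := i - j with hn
  have hi : i = j + n := by omega
  have hL : 2 ^ i ≡ 2 ^ j [MOD 10 ^ m] ↔ (5:ℤ) ^ m ∣ 2 ^ n - 1 := by
    rw [Nat.modEq_iff_dvd]
    push_cast
    have hsplit : ((10:ℤ)) ^ m = 2 ^ m * 5 ^ m := by
      rw [show (10:ℤ) = 2 * 5 by norm_num, mul_pow]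
    rw [hsplit]
    have hfac : (2:ℤ) ^ j - 2 ^ i = -(2 ^ j * (2 ^ n - 1)) := by
      rw [hi, pow_add]; ring
    rw [hfac, dvd_neg]
    constructor
    · intro h
      have h5 : (5:ℤ) ^ m ∣ 2 ^ j * (2 ^ n - 1) := (dvd_mul_left _ _).trans h
      have hcop : IsCoprime ((5:ℤ) ^ m) (2 ^ j) := by
        apply IsCoprime.pow
        rw [Int.isCoprime_iff_gcd_eq_one]; decide
      exact hcop.dvd_of_dvd_mul_left h5
    · intro h
      exact mul_dvd_mul (pow_dvd_pow 2 hmj) h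
  have hR : i ≡ j [MOD 4 * 5 ^ (m - 1)] ↔ 4 * 5 ^ (m - 1) ∣ n := by
    rw [Nat.ModEq.comm, Nat.modEq_iff_dvd' hji]
  rw [hL, hR, key m n hm]
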